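/- Under the algebraic assumptions H^2 = -1, μ^2 = 1, [D,μ] = μ', HD = DH, and with L = [H,μ] = Hμ - μH and |∇| = HD, the following identity holds: [μ|∇| + |∇|μ, L] = -[μ, μ' + Hμ'H]. -/
import Mathlib


/-- With `H² = -1`, `μ² = 1`, `[D,μ] = μ'`, `μμ' + μ'μ = 0`, `HD = DH`,
`L = [H,μ]` and `|∇| = HD`, one has `[μ|∇| + |∇|μ, L] = -[μ, μ' + Hμ'H]`. -/
theorem commutator_B_L {R : Type*} [Ring R] (H D μ μ' : R)
    (hH : H ^ 2 = -1) (hμ : μ ^ 2 = 1) (hD : D * μ - μ * D = μ')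
    (hanti : μ * μ' + μ' * μ = 0) (hHD : H * D = D * H) :
    (μ * (H * D) + (H * D) * μ) * (H * μ - μ * H)
      - (H * μ - μ * H) * (μ * (H * D) + (H * D) * μ)
      = -(μ * (μ' + H * μ' * H) - (μ' + H * μ' * H) * μ) := by
  have e1 : H*H + 1 = 0 := by rw [← sq, hH]; simp
  have e2 : μ*μ - 1 = 0 := by rw [← sq, hμ]; simp
  have e3 : D*μ - μ*D - μ' = 0 := by rw [hD]; simp
  have e4 : D*H - H*D = 0 := by rw [hHD]; simp
  have e5 : μ*μ' + μ'*μ = 0 := hanti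
  have key : (μ * (H * D) + (H * D) * μ) * (H * μ - μ * H)
      - (H * μ - μ * H) * (μ * (H * D) + (H * D) * μ)
      - (-(μ * (μ' + H * μ' * H) - (μ' + H * μ' * H) * μ))
      = μ*H*(D*H - H*D)*μ + (-1:R)*μ*H*(D*μ - μ*D - μ')*H + H*(D*μ - μ*D - μ')*H*μ + (-1:R)*H*(D*μ - μ*D - μ')*μ*H + (-1:R)*H*(μ*μ - 1)*H*D + (-1:R)*H*μ*H*(D*μ - μ*D - μ') + μ*(H*H + 1)*D*μ + (μ*μ' + μ'*μ) + μ*(H*H + 1)*D*μ + (-1:R)*μ*H*μ*(D*H - H*D) + H*μ*(D*H - H*D)*μ + (-1:R)*H*μ*(D*μ - μ*D - μ')*H + (-1:R)*(H*H + 1)*D + (-1:R)*μ*(D*μ - μ*D - μ') + (-1:R)*μ*(D*μ - μ*D - μ') + H*μ*H*(D*μ - μ*D - μ') + (-1:R)*H*(μ*μ - 1)*D*H + (-1:R)*H*(μ*μ' + μ'*μ)*H + (-1:R)*(μ*μ - 1)*D + (-1:R)*(μ*μ' + μ'*μ) + (-1:R)*(μ*μ - 1)*D + (-1:R)*(μ*μ'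 + μ'*μ) + (-1:R)*H*(D*H - H*D) + (-1:R)*(H*H + 1)*D := by noncomm_ring
  rw [e1, e2, e3, e4, e5] at key
  simp only [mul_zero, zero_mul, add_zero, zero_add, mul_one, neg_zero] at key
  exact sub_eq_zero.mp key
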